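/- arXiv:math/0408188 — 4 statements merged into one kernel-verified Lean document; each statement's English description precedes it below -/
import Mathlib

section
/- Let V be an R-module with decomposition V = H ⊕ K, let π : V → H be the projection, and let D̄ : V → V satisfy D̄² = 0 and suppose K is a D̄-invariant acyclic subcomplex (i.e., D̄(K) ⊆ K and the complex (K, D̄|_K) is exact). Define d_H = π ∘ D̄ restricted to H (viewing H ⊆ V). Then d_H ∘ d_H = 0 and π induces an isomorphism from the homology of (V, D̄) to the homology of (H, d_H). -/
/-- If `V = H ⊕ K`, `π` the projection onto `H` along `K`, `D̄² = 0`,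
`K` a `D̄`-invariant acyclic subcomplex, and `d_H = π ∘ D̄` on `H`, then `d_H² = 0`
and `π` induces an isomorphism from the homology of `(V, D̄)` to that of `(H, d_H)`. -/
theorem stmt4 {R V : Type*} [CommRing R] [AddCommGroup V] [Module R V]
    (H K : Submodule R V)
    (hsum : H ⊔ K = ⊤) (hdisj : H ⊓ K = ⊥)
    (π : Module.End R V)
    (hπH : ∀ h ∈ H, π h = h) (hπK : ∀ k ∈ K, π k = 0)
    (hπrange : ∀ v : V, π v ∈ H) (hπcompl : ∀ v : V, v - π v ∈ K)
    (Dbar : Module.End R V) (hD2 : Dbar * Dbar = 0)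
    (hDK : ∀ k ∈ K, Dbar k ∈ K)
    (hKacyclic : ∀ k ∈ K, Dbar k = 0 → ∃ k' ∈ K, Dbar k' = k) :
    -- the Hirsch--Brown differential `d_H = π ∘ D̄ |_H` squares to zero
    (∀ h ∈ H, π (Dbar (π (Dbar h))) = 0) ∧
    -- `π` is a chain map from `(V, D̄)` to `(H, d_H)`
    (∀ v : V, π (Dbar v) = π (Dbar (π v))) ∧
    -- `π` is surjective on homology
    (∀ h ∈ H, π (Dbar h) = 0 → ∃ v : V, Dbar v = 0 ∧ ∃ h' ∈ H, π v - h = π (Dbar h')) ∧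
    -- `π` is injective on homology
    (∀ v : V, Dbar v = 0 → (∃ h ∈ H, π v = π (Dbar h)) → ∃ w : V, Dbar w = v) := by
  have hDD : ∀ x : V, Dbar (Dbar x) = 0 := fun x => DFunLike.congr_fun hD2 x
  -- membership in K from π = 0
  have hKmem : ∀ x : V, π x = 0 → x ∈ K := fun x hx => by
    have := hπcompl x; rwa [hx, sub_zero] at this
  -- chain map
  have chain : ∀ v : V, π (Dbar v) = π (Dbar (π v)) := by
    intro v
    have hk : v - π v ∈ K := hπcompl v
    have h1 : Dbar (v - π v) ∈ K := hDK _ hk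
    have h2 : π (Dbar (v - π v)) = 0 := hπK _ h1
    have : π (Dbar v) - π (Dbar (π v)) = 0 := by
      simpa [map_sub] using h2
    exact sub_eq_zero.mp this
  refine ⟨?_, chain, ?_, ?_⟩
  · intro h hh
    have := chain (Dbar h)
    rw [← this, hDD, map_zero]
  · intro h hh hdh
    have hk : Dbar h ∈ K := hKmem _ hdh
    have hdk : Dbar (Dbar h) = 0 := hDD h
    obtain ⟨k', hk', hdk'⟩ := hKacyclic _ hk hdk
    refine ⟨h - k', by rw [map_sub, hdk', sub_self], 0, H.zero_mem, ?_⟩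
    rw [map_sub, hπH h hh, hπK _ hk', sub_zero, sub_self, map_zero, map_zero]
  · rintro v hv ⟨h, hh, hp⟩
    have hmem : v - Dbar h ∈ K := by
      apply hKmem
      rw [map_sub, hp, sub_self]
    have hd0 : Dbar (v - Dbar h) = 0 := by rw [map_sub, hDD, sub_zero, hv]
    obtain ⟨k', hk', hdk'⟩ := hKacyclic _ hmem hd0
    exact ⟨h + k', by rw [map_add, hdk']; abel⟩
end

section
/- Under the Hodge-identity hypotheses of the previous context (I = H + ΔG with Δ = dd* + d*d, H annihilating and annihilated by d and d*, G commuting with d and d*), with ∂ linear, ∂² = 0, d∂ = −∂d, P = d*G∂ locally nilpotent, φ = I − P, and d_G = d − ∂: for every a ∈ V with d(a) = 0 and d*(a) = 0 (i.e., a harmonic), one has H ∘ ψ⁻¹ ∘ d_G ∘ ψ (a) = φ ∘ d_G ∘ φ⁻¹ (a), where Q = ∂d*G, ψ = I − Q. Equivalently, the Hirsch–Brown differential on harmonic elements satisfies d_HB = (I−P) d_G (I−P)⁻¹. -/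
/-- Theorem (3.8): under the Hodge identities, on harmonic elements
`a` one has `H ψ⁻¹ d_G ψ (a) = (I-P) d_G (I-P)⁻¹ (a)`. -/
theorem stmt7 {R V : Type*} [CommRing R] [AddCommGroup V] [Module R V]
    (d ds G H del : Module.End R V)
    (hHodge : (1 : Module.End R V) = H + (d * ds + ds * d) * G)
    (hdG : d * G = G * d) (hdsG : ds * G = G * ds)
    (hdH : d * H = 0) (hHd : H * d = 0)
    (hdsH : ds * H = 0) (hHds : H * ds = 0)
    (hd2 : d * d = 0) (hds2 : ds * ds = 0)
    (hdel2 : del * del = 0) (hanti : d * del = -(del * d))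
    (P Q : Module.End R V)
    (hP : P = ds * G * del) (hQ : Q = del * (ds * G))
    (hPnil : ∀ v : V, ∃ n : ℕ, (P ^ n) v = 0)
    (hQnil : ∀ v : V, ∃ n : ℕ, (Q ^ n) v = 0)
    (φinv ψinv : Module.End R V)
    (hφ₁ : φinv * (1 - P) = 1) (hφ₂ : (1 - P) * φinv = 1)
    (hψ₁ : ψinv * (1 - Q) = 1) (hψ₂ : (1 - Q) * ψinv = 1)
    (dG : Module.End R V) (hdGdef : dG = d - del) :
    ∀ a : V, d a = 0 → ds a = 0 →
      H (ψinv (dG ((1 - Q) a))) = (1 - P) (dG (φinv a)) := by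
  intro a hda hdsa
  -- notation: Δ = dd* + d*d
  have hH : H = 1 - (d * ds + ds * d) * G := by rw [hHodge]; abel
  have hdeld : del * d = -(d * del) := by rw [hanti, neg_neg]
  have hPdel : P * del = 0 := by rw [hP, mul_assoc, hdel2, mul_zero]
  -- commutator identity [d, P] = Δ G ∂
  have hcomm : d * P - P * d = (d * ds + ds * d) * G * del := by
    rw [hP]
    calc d * (ds * G * del) - ds * G * del * d
        = d * (ds * G * del) - ds * G * (del * d) := by noncomm_ring
      _ = d * (ds * G * del) - ds * G * (-(d * del)) := by rw [hdeld]
      _ = d * ds * G * del + ds * (G * d) * del := by noncomm_ring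
      _ = d * ds * G * del + ds * (d * G) * del := by rw [hdG]
      _ = (d * ds + ds * d) * G * del := by noncomm_ring
  -- key identity ψ⁻¹ ∂ = ∂ φ⁻¹
  have hψQdel : (1 - Q) * del = del * (1 - P) := by
    have hQdel : Q * del = del * P := by rw [hQ, hP]; noncomm_ring
    rw [mul_sub, sub_mul, mul_one, one_mul, hQdel]
  have hkey : ψinv * del = del * φinv := by
    calc ψinv * del = ψinv * del * ((1 - P) * φinv) := by rw [hφ₂, mul_one]
      _ = ψinv * (del * (1 - P)) * φinv := by noncomm_ring
      _ = ψinv * ((1 - Q) * del) * φinv := by rw [hψQdel]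
      _ = (ψinv * (1 - Q)) * (del * φinv) := by noncomm_ring
      _ = del * φinv := by rw [hψ₁, one_mul]
  -- pointwise facts
  have hQa : Q a = 0 := by
    have h1 : ds (G a) = G (ds a) := LinearMap.congr_fun hdsG a
    rw [hQ]
    simp only [Module.End.mul_apply]
    rw [h1, hdsa, map_zero, map_zero]
  set b : V := φinv a with hb
  have hab : (1 - P) b = a := by
    have := LinearMap.congr_fun hφ₂ a
    simpa [Module.End.mul_apply] using this
  -- LHS = -(H (del b))
  have hLHS : H (ψinv (dG ((1 - Q) a))) = -(H (del b)) := by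
    have h1 : (1 - Q) a = a := by
      simp [LinearMap.sub_apply, hQa]
    have h2 : dG a = -(del a) := by
      rw [hdGdef]
      simp [LinearMap.sub_apply, hda]
    have h3 : ψinv (del a) = del b := by
      have := LinearMap.congr_fun hkey a
      simpa [Module.End.mul_apply] using this
    rw [h1, h2, map_neg, h3, map_neg]
  -- d b = d (P b)
  have hdb : d b = d (P b) := by
    have h0 : d ((1 - P) b) = 0 := by rw [hab, hda]
    have h1 : d b - d (P b) = 0 := by
      simpa [LinearMap.sub_apply, map_sub] using h0
    exact sub_eq_zero.mp h1
  rw [hLHS]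
  -- now compute the RHS
  have hPdelb : P (del b) = 0 := by
    have := LinearMap.congr_fun hPdel b
    simpa [Module.End.mul_apply] using this
  have hcommb : d (P b) - P (d b) = ((d * ds + ds * d) * G) (del b) := by
    have := LinearMap.congr_fun hcomm b
    simpa [Module.End.mul_apply, LinearMap.sub_apply] using this
  have hHdelb : H (del b) = del b - ((d * ds + ds * d) * G) (del b) := by
    rw [hH]
    simp [LinearMap.sub_apply]
  rw [hdGdef]
  simp only [LinearMap.sub_apply, map_sub, Module.End.one_apply]
  rw [hHdelb, hPdelb]
  have : d b - P (d b) = ((d * ds + ds * d) * G) (del b) := by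
    nth_rewrite 1 [hdb]; exact hcommb
  rw [this]
  abel
end

section
/- Under the Hodge-identity hypotheses (I = H + ΔG, Δ = dd* + d*d, G commuting with d and d*, H d = d H = 0 = H d* = d* H, d² = (d*)² = 0), with ∂ linear, ∂² = 0, d∂ = −∂d, P = d*G∂ locally nilpotent, φ = I−P, d_G = d−∂: for every α ∈ V, (I−P) d_G (I−P)⁻¹(α) = H d_G (I−P)⁻¹(α) + d(α). -/
/-- Remark (3.14)(3): for every `α`,
`(I-P) d_G (I-P)⁻¹ α = H d_G (I-P)⁻¹ α + d α`. -/
theorem stmt12 {R V : Type*} [CommRing R] [AddCommGroup V] [Module R V]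
    (d ds G H del : Module.End R V)
    (hHodge : (1 : Module.End R V) = H + (d * ds + ds * d) * G)
    (hdG : d * G = G * d) (hdsG : ds * G = G * ds)
    (hdH : d * H = 0) (hHd : H * d = 0)
    (hdsH : ds * H = 0) (hHds : H * ds = 0)
    (hd2 : d * d = 0) (hds2 : ds * ds = 0)
    (hdel2 : del * del = 0) (hanti : d * del = -(del * d))
    (P : Module.End R V) (hP : P = ds * G * del)
    (hPnil : ∀ v : V, ∃ n : ℕ, (P ^ n) v = 0)
    (φinv : Module.End R V)
    (hφ₁ : φinv * (1 - P) = 1) (hφ₂ : (1 - P) * φinv = 1)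
    (dG : Module.End R V) (hdGdef : dG = d - del) :
    ∀ α : V, (1 - P) (dG (φinv α)) = H (dG (φinv α)) + d α := by
  have hdeld : del * d = -(d * del) := by rw [hanti, neg_neg]
  have hH : H = 1 - (d * ds + ds * d) * G := by rw [hHodge]; noncomm_ring
  have L : (1 - ds * G * del) * (d - del) = d - del + ds * (G * (d * del)) := by
    calc (1 - ds * G * del) * (d - del)
        = d - del - ds * (G * (del * d)) + ds * (G * (del * del)) := by noncomm_ring
      _ = d - del + ds * (G * (d * del)) := by rw [hdeld, hdel2]; noncomm_ring
  have Rc : H * (d - del) + d * (1 - ds * G * del) = d - del + ds * (G * (d * del)) := by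
    calc H * (d - del) + d * (1 - ds * G * del)
        = H * d - H * del + d - d * (ds * (G * del)) := by noncomm_ring
      _ = -(H * del) + d - d * (ds * (G * del)) := by rw [hHd]; noncomm_ring
      _ = -((1 - (d * ds + ds * d) * G) * del) + d - d * (ds * (G * del)) := by rw [← hH]
      _ = d - del + ds * ((d * G) * del) := by noncomm_ring
      _ = d - del + ds * (G * (d * del)) := by rw [hdG, mul_assoc]
  have h1 : (1 - P) * dG = H * dG + d * (1 - P) := by
    rw [hP, hdGdef]; exact L.trans Rc.symm
  have h2 : (1 - P) * dG * φinv = H * (dG * φinv) + d := by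
    calc (1 - P) * dG * φinv = (H * dG + d * (1 - P)) * φinv := by rw [h1]
      _ = H * (dG * φinv) + d * ((1 - P) * φinv) := by noncomm_ring
      _ = H * (dG * φinv) + d := by rw [hφ₂, mul_one]
  intro α
  have h3 := DFunLike.congr_fun h2 α
  simpa [Module.End.mul_apply, LinearMap.add_apply] using h3
end

section
/- Let V be an R-module with operators as in the Hirsch–Brown setup: H, P, Q : V → V with HP = 0, Q ∘ i_H = 0 on a subspace W ⊆ V with H|_W = id and H(V) = W, and P, Q locally nilpotent with PQ = QP = 0. Define θ = H ∘ (I−Q)⁻¹ and ĝ = (I−P)⁻¹ ∘ i_W. Then θ ∘ ĝ = id_W. -/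
/-- Corollary (3.9), final assertion: `H (I-Q)⁻¹ (I-P)⁻¹` restricts
to the identity on the subspace `W` of harmonics. -/
theorem stmt17 {R V : Type*} [CommRing R] [AddCommGroup V] [Module R V]
    (P Q H : Module.End R V) (W : Submodule R V)
    (hHP : H * P = 0)
    (hQW : ∀ w ∈ W, Q w = 0)
    (hHW : ∀ w ∈ W, H w = w)
    (hHrange : LinearMap.range H = W)
    (hPnil : ∀ v : V, ∃ n : ℕ, (P ^ n) v = 0)
    (hQnil : ∀ v : V, ∃ n : ℕ, (Q ^ n) v = 0)
    (hPQ : P * Q = 0) (hQP : Q * P = 0)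
    (φinv ψinv : Module.End R V)
    (hφ₁ : φinv * (1 - P) = 1) (hφ₂ : (1 - P) * φinv = 1)
    (hψ₁ : ψinv * (1 - Q) = 1) (hψ₂ : (1 - Q) * ψinv = 1) :
    ∀ w ∈ W, H (ψinv (φinv w)) = w := by
  intro w hw
  -- ψinv fixes w since Q w = 0
  have hψw : ψinv w = w := by
    have h := LinearMap.congr_fun hψ₁ w
    simp [Module.End.mul_apply, hQW w hw] at h
    exact h
  -- ψinv fixes P v since Q P = 0
  have hψP : ∀ v : V, ψinv (P v) = P v := by
    intro v
    have hqp : Q (P v) = 0 := LinearMap.congr_fun hQP v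
    have h := LinearMap.congr_fun hψ₁ (P v)
    simp [Module.End.mul_apply, hqp] at h
    exact h
  -- φinv w = w + P (φinv w)
  have hφ : φinv w = w + P (φinv w) := by
    have h := LinearMap.congr_fun hφ₂ w
    simp [Module.End.mul_apply, sub_eq_iff_eq_add] at h
    linear_combination (norm := module) h
  have hHPv : ∀ v : V, H (P v) = 0 := fun v => LinearMap.congr_fun hHP v
  calc H (ψinv (φinv w)) = H (ψinv (w + P (φinv w))) := by rw [← hφ]
    _ = H (w + P (φinv w)) := by rw [map_add, hψw, hψP]
    _ = w := by rw [map_add, hHW w hw, hHPv, add_zero]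
end
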